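/- Gibbs states maximize entropy subject to their own expectation-value constraints: let C_1,…,C_m be Hermitian n×n matrices, f_1,…,f_m real numbers, and set ρ* = exp(Σ_α f_α C_α) / Tr exp(Σ_α f_α C_α). Then for every n×n density matrix ρ̄ satisfying Tr(ρ̄ C_α) = Tr(ρ* C_α) for all α = 1,…,m, one has S(ρ̄) ≤ S(ρ*), with equality if and only if ρ̄ = ρ*. -/

import Mathlib

open scoped ComplexOrder

/-- The function `s(p) = −p·log p` for `p > 0`, `s(p) = 0` otherwise. -/
noncomputable def sfun (p : ℝ) : ℝ := if 0 < p then -p * Real.log p else 0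

/-- An `n×n` complex matrix is a density matrix if it is Hermitian positive
semidefinite with trace one. -/
def IsDensityMatrix {n : ℕ} (ρ : Matrix (Fin n) (Fin n) ℂ) : Prop :=
  ρ.PosSemidef ∧ ρ.trace = 1

/-- The von Neumann entropy `S(ρ) = Σ_k s(λ_k)` of a Hermitian matrix, where the
`λ_k` are its eigenvalues listed with multiplicity (junk value `0` otherwise). -/
noncomputable def vnEntropy {n : ℕ} (ρ : Matrix (Fin n) (Fin n) ℂ) : ℝ :=
  if h : ρ.IsHermitian then ∑ k, sfun (h.eigenvalues k) else 0

section Aux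

open Matrix Polynomial

variable {N : ℕ}

lemma sfun_eq {x : ℝ} (hx : 0 ≤ x) : sfun x = -(x * Real.log x) := by
  rcases hx.eq_or_lt with h | h
  · simp [sfun, ← h]
  · simp [sfun, h, neg_mul]

lemma charpoly_unitary_conj (U : Matrix.unitaryGroup (Fin N) ℂ) (A : Matrix (Fin N) (Fin N) ℂ) :
    ((U : Matrix (Fin N) (Fin N) ℂ) * A * star (U : Matrix (Fin N) (Fin N) ℂ)).charpoly
      = A.charpoly := by
  set PU := (C : ℂ →+* ℂ[X]).mapMatrix (U : Matrix (Fin N) (Fin N) ℂ) with hPU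
  set PV := (C : ℂ →+* ℂ[X]).mapMatrix (star (U : Matrix (Fin N) (Fin N) ℂ)) with hPV
  have hUV : PU * PV = 1 := by
    rw [hPU, hPV, ← _root_.map_mul _ _ _, U.2.2, _root_.map_one _]
  have hVU : PV * PU = 1 := by
    rw [hPU, hPV, ← _root_.map_mul _ _ _, U.2.1, _root_.map_one _]
  have hcomm : ∀ (M : Matrix (Fin N) (Fin N) ℂ[X]),
      M * Matrix.scalar (Fin N) (X : ℂ[X]) = Matrix.scalar (Fin N) (X : ℂ[X]) * M := by
    intro M
    ext i j
    simp [Matrix.scalar, Matrix.mul_apply, Matrix.diagonal, mul_comm]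
  have h1 : charmatrix ((U : Matrix (Fin N) (Fin N) ℂ) * A * star (U : Matrix (Fin N) (Fin N) ℂ))
      = PU * charmatrix A * PV := by
    rw [charmatrix, charmatrix]
    rw [mul_sub, sub_mul]
    congr 1
    · rw [mul_assoc, ← hcomm PV, ← mul_assoc, hUV, one_mul]
    · simp [hPU, hPV, _root_.map_mul]
  rw [Matrix.charpoly, Matrix.charpoly, h1, det_mul, det_mul]
  have h2 : PU.det * PV.det = 1 := by rw [← det_mul, hUV, det_one]
  calc PU.det * (charmatrix A).det * PV.det
      = (charmatrix A).det * (PU.det * PV.det) := by ring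
    _ = (charmatrix A).det := by rw [h2, mul_one]

lemma charpoly_diag (d : Fin N → ℂ) :
    (diagonal d).charpoly = ∏ i, (X - C (d i)) := by
  have h : charmatrix (diagonal d) = diagonal (fun i => X - C (d i)) := by
    ext i j
    by_cases h : i = j
    · subst h; simp
    · rw [charmatrix_apply_ne _ _ _ h, diagonal_apply_ne _ h, diagonal_apply_ne _ h, map_zero,
        neg_zero]
  rw [Matrix.charpoly, h, det_diagonal]

lemma sum_g_eigenvalues_of_conj (U : Matrix.unitaryGroup (Fin N) ℂ) (d : Fin N → ℝ)
    {A : Matrix (Fin N) (Fin N) ℂ}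
    (hA : A = (U : Matrix (Fin N) (Fin N) ℂ) * diagonal (fun i => (d i : ℂ))
        * star (U : Matrix (Fin N) (Fin N) ℂ))
    (hh : A.IsHermitian) (g : ℝ → ℝ) :
    ∑ i, g (hh.eigenvalues i) = ∑ i, g (d i) := by
  have key : ∀ (e : Fin N → ℝ), ∏ i, (X - C ((e i : ℂ)))
      = ((Finset.univ.val.map (fun i => (e i : ℂ))).map (fun a => X - C a)).prod := by
    intro e
    rw [Multiset.map_map]
    rfl
  have h1 : A.charpoly = ∏ i, (X - C ((d i : ℂ))) := by
    rw [hA, charpoly_unitary_conj, charpoly_diag]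
  have h2 : A.charpoly = ∏ i, (X - C ((hh.eigenvalues i : ℂ))) := by
    conv_lhs => rw [hh.spectral_theorem]
    rw [show (diagonal (RCLike.ofReal ∘ hh.eigenvalues) : Matrix (Fin N) (Fin N) ℂ)
        = diagonal (fun i => (hh.eigenvalues i : ℂ)) from rfl]
    rw [Unitary.conjStarAlgAut_apply, charpoly_unitary_conj, charpoly_diag]
  have h3 : Finset.univ.val.map (fun i => (d i : ℂ))
      = Finset.univ.val.map (fun i => (hh.eigenvalues i : ℂ)) := by
    have h12 := h1.symm.trans h2
    rw [key d, key hh.eigenvalues] at h12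
    calc Finset.univ.val.map (fun i => (d i : ℂ))
        = ((Finset.univ.val.map (fun i => (d i : ℂ))).map (fun a => X - C a)).prod.roots := by
          rw [roots_multiset_prod_X_sub_C]
      _ = ((Finset.univ.val.map (fun i => (hh.eigenvalues i : ℂ))).map
            (fun a => X - C a)).prod.roots := by rw [← h12]
      _ = _ := by rw [roots_multiset_prod_X_sub_C]
  have h4 : Finset.univ.val.map d = Finset.univ.val.map hh.eigenvalues := by
    apply Multiset.map_injective (f := (Complex.ofReal : ℝ → ℂ)) Complex.ofReal_injective
    rw [Multiset.map_map, Multiset.map_map]; exact h3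
  have h5 : ∀ (e : Fin N → ℝ), ∑ i, g (e i) = ((Finset.univ.val.map e).map g).sum := by
    intro e
    rw [Multiset.map_map]
    rfl
  rw [h5, h5, h4]

lemma herm_conj_diag (U : Matrix.unitaryGroup (Fin N) ℂ) (d : Fin N → ℝ) :
    ((U : Matrix (Fin N) (Fin N) ℂ) * diagonal (fun i => (d i : ℂ))
      * star (U : Matrix (Fin N) (Fin N) ℂ)).IsHermitian := by
  have hd : (diagonal (fun i => (d i : ℂ)))ᴴ = diagonal (fun i => (d i : ℂ)) := by
    rw [diagonal_conjTranspose,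
      show (star fun i => ((d i : ℂ))) = (fun i => ((d i : ℂ))) from
        funext fun i => Complex.conj_ofReal (d i)]
  unfold Matrix.IsHermitian
  rw [conjTranspose_mul, conjTranspose_mul, hd, ← Matrix.star_eq_conjTranspose,
    ← Matrix.star_eq_conjTranspose, star_star, Matrix.mul_assoc]

lemma trace_unitary_conj (U : Matrix.unitaryGroup (Fin N) ℂ) (A : Matrix (Fin N) (Fin N) ℂ) :
    ((U : Matrix (Fin N) (Fin N) ℂ) * A * star (U : Matrix (Fin N) (Fin N) ℂ)).trace = A.trace := by
  rw [Matrix.trace_mul_comm, ← Matrix.mul_assoc, U.2.1, Matrix.one_mul]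

lemma trace_dWdW (a b : Fin N → ℝ) (W : Matrix (Fin N) (Fin N) ℂ) :
    (diagonal (fun i => (a i : ℂ)) * W * diagonal (fun k => (b k : ℂ)) * star W).trace
      = ((∑ j, ∑ k, a j * b k * Complex.normSq (W j k) : ℝ) : ℂ) := by
  rw [Matrix.star_eq_conjTranspose]
  push_cast
  simp only [Matrix.trace, Matrix.diag]
  refine Finset.sum_congr rfl fun j _ => ?_
  rw [Matrix.mul_apply]
  refine Finset.sum_congr rfl fun k _ => ?_
  rw [Matrix.mul_diagonal, Matrix.diagonal_mul]
  rw [conjTranspose_apply, Complex.star_def, Complex.normSq_eq_conj_mul_self]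
  ring

lemma klein {p q : ℝ} (hp : 0 ≤ p) (hq : 0 < q) :
    p - q ≤ p * Real.log p - p * Real.log q
      ∧ (p * Real.log p - p * Real.log q = p - q ↔ p = q) := by
  rcases hp.eq_or_lt with h | h
  · subst h
    simp only [zero_mul, sub_zero, zero_sub, sub_self]
    constructor
    · linarith
    · constructor
      · intro h0; linarith
      · intro h0; exact absurd h0.symm hq.ne'
  · have hlog : Real.log (q / p) ≤ q / p - 1 := Real.log_le_sub_one_of_pos (by positivity)
    have hlq : Real.log (q / p) = Real.log q - Real.log p := Real.log_div hq.ne' h.ne'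
    have hmul : p * Real.log (q / p) ≤ p * (q / p - 1) :=
      mul_le_mul_of_nonneg_left hlog h.le
    have hdiv : p * (q / p - 1) = q - p := by field_simp
    constructor
    · nlinarith [hmul]
    · constructor
      · intro h0
        by_contra hne
        have hne' : q / p ≠ 1 := by
          intro hc
          apply hne
          field_simp at hc
          linarith
        have hlt := Real.log_lt_sub_one_of_pos (x := q / p) (by positivity) hne'
        nlinarith [mul_lt_mul_of_pos_left hlt h]
      · intro h0; subst h0; ring

end Aux

open NormedSpace in
theorem gibbs_maximizes_entropy
    {n m : ℕ} (C : Fin m → Matrix (Fin n) (Fin n) ℂ)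
    (hC : ∀ α, (C α).IsHermitian) (f : Fin m → ℝ)
    (ρstar : Matrix (Fin n) (Fin n) ℂ)
    (hρstar : ρstar = ((exp (∑ α, ((f α : ℂ) • C α))).trace)⁻¹ •
        exp (∑ α, ((f α : ℂ) • C α)))
    (ρbar : Matrix (Fin n) (Fin n) ℂ) (hρbar : IsDensityMatrix ρbar)
    (hconstraints : ∀ α, (ρbar * C α).trace = (ρstar * C α).trace) :
    vnEntropy ρbar ≤ vnEntropy ρstar ∧
      (vnEntropy ρbar = vnEntropy ρstar ↔ ρbar = ρstar) := by
  classical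
  -- dispose of n = 0
  rcases Nat.eq_zero_or_pos n with h0 | hpos
  · subst h0
    have htr := hρbar.2
    simp [Matrix.trace] at htr
  haveI : Nonempty (Fin n) := ⟨⟨0, hpos⟩⟩
  set H : Matrix (Fin n) (Fin n) ℂ := ∑ α, ((f α : ℂ) • C α) with hHdef
  have hH : H.IsHermitian := by
    unfold Matrix.IsHermitian
    rw [hHdef, Matrix.conjTranspose_sum]
    refine Finset.sum_congr rfl fun α _ => ?_
    rw [Matrix.conjTranspose_smul, Complex.star_def, Complex.conj_ofReal, (hC α).eq]
  set U := hH.eigenvectorUnitary with hUdef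
  set μ := hH.eigenvalues with hμdef
  set Z : ℝ := ∑ k, Real.exp (μ k) with hZdef
  have hZpos : 0 < Z := Finset.sum_pos (fun k _ => Real.exp_pos _) Finset.univ_nonempty
  set q : Fin n → ℝ := fun k => Real.exp (μ k) / Z with hqdef
  have hq : ∀ k, 0 < q k := fun k => div_pos (Real.exp_pos _) hZpos
  have hsumq : ∑ k, q k = 1 := by
    rw [hqdef, ← Finset.sum_div, ← hZdef, div_self hZpos.ne']
  have hlogq : ∀ k, Real.log (q k) = μ k - Real.log Z := fun k => by
    rw [hqdef, Real.log_div (Real.exp_pos _).ne' hZpos.ne', Real.log_exp]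
  have hsp : H = (U : Matrix (Fin n) (Fin n) ℂ) * Matrix.diagonal (fun k => (μ k : ℂ))
      * star (U : Matrix (Fin n) (Fin n) ℂ) := hH.spectral_theorem
  have hUunit : IsUnit (U : Matrix (Fin n) (Fin n) ℂ) := ⟨⟨(U : Matrix (Fin n) (Fin n) ℂ), star (U : Matrix (Fin n) (Fin n) ℂ), U.2.2, U.2.1⟩, rfl⟩
  have hUinv : (U : Matrix (Fin n) (Fin n) ℂ)⁻¹ = star (U : Matrix (Fin n) (Fin n) ℂ) :=
    Matrix.inv_eq_left_inv U.2.1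
  have hexpD : exp (Matrix.diagonal (fun k => (μ k : ℂ)))
      = Matrix.diagonal (fun k => (Real.exp (μ k) : ℂ)) := by
    rw [Matrix.exp_diagonal,
      show (exp fun k => ((μ k : ℂ))) = (fun k => (Real.exp (μ k) : ℂ)) from
        funext fun k => by rw [Pi.coe_exp, ← Complex.exp_eq_exp_ℂ, Complex.ofReal_exp]]
  have hexpH : exp H = (U : Matrix (Fin n) (Fin n) ℂ)
      * Matrix.diagonal (fun k => (Real.exp (μ k) : ℂ)) * star (U : Matrix (Fin n) (Fin n) ℂ) := by
    rw [hsp, ← hUinv, Matrix.exp_conj _ _ hUunit, hexpD, hUinv]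
  have hZc : (exp H).trace = (Z : ℂ) := by
    rw [hexpH, trace_unitary_conj, Matrix.trace_diagonal, hZdef]
    push_cast
    rfl
  have hρq : ρstar = (U : Matrix (Fin n) (Fin n) ℂ) * Matrix.diagonal (fun k => (q k : ℂ))
      * star (U : Matrix (Fin n) (Fin n) ℂ) := by
    rw [hρstar, hZc, hexpH, ← Matrix.smul_mul, ← Matrix.mul_smul]
    congr 1
    congr 1
    ext i j
    rcases eq_or_ne i j with rfl | hij
    · simp only [Matrix.smul_apply, Matrix.diagonal_apply_eq, smul_eq_mul, hqdef]
      push_cast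
      rw [div_eq_inv_mul]
    · simp [Matrix.diagonal_apply_ne _ hij]
  have hρsherm : ρstar.IsHermitian := by
    rw [hρq]; exact herm_conj_diag U q
  have hSstar : vnEntropy ρstar = ∑ k, sfun (q k) := by
    rw [vnEntropy, dif_pos hρsherm]
    exact sum_g_eigenvalues_of_conj U q hρq hρsherm sfun
  -- ρbar spectral data
  have hρbherm : ρbar.IsHermitian := hρbar.1.1
  set V := hρbherm.eigenvectorUnitary with hVdef
  set p : Fin n → ℝ := hρbherm.eigenvalues with hpdef
  have hρbV : ρbar = (V : Matrix (Fin n) (Fin n) ℂ) * Matrix.diagonal (fun j => (p j : ℂ))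
      * star (V : Matrix (Fin n) (Fin n) ℂ) := hρbherm.spectral_theorem
  have hSbar : vnEntropy ρbar = ∑ j, sfun (p j) := by
    rw [vnEntropy, dif_pos hρbherm]
  have hp0 : ∀ j, 0 ≤ p j := fun j => hρbar.1.eigenvalues_nonneg j
  have hsump : ∑ j, p j = 1 := by
    have htr := hρbar.2
    rw [hρbV, trace_unitary_conj, Matrix.trace_diagonal] at htr
    exact_mod_cast htr
  -- the overlap unitary
  set Wg : Matrix.unitaryGroup (Fin n) ℂ := V⁻¹ * U with hWgdef
  set W : Matrix (Fin n) (Fin n) ℂ := (Wg : Matrix (Fin n) (Fin n) ℂ) with hWdef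
  have hWVU : W = star (V : Matrix (Fin n) (Fin n) ℂ) * (U : Matrix (Fin n) (Fin n) ℂ) := by
    rw [hWdef, hWgdef, Matrix.UnitaryGroup.mul_val, Matrix.UnitaryGroup.inv_val]
  have hUVW : (U : Matrix (Fin n) (Fin n) ℂ) = (V : Matrix (Fin n) (Fin n) ℂ) * W := by
    rw [hWVU, ← Matrix.mul_assoc, V.2.2, Matrix.one_mul]
  set c : Fin n → Fin n → ℝ := fun j k => Complex.normSq (W j k) with hcdef
  have hc0 : ∀ j k, 0 ≤ c j k := fun j k => Complex.normSq_nonneg _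
  have hWW : W * star W = 1 := by
    rw [hWdef]; exact Wg.2.2
  have hWW' : star W * W = 1 := by
    rw [hWdef]; exact Wg.2.1
  have hrow : ∀ j, ∑ k, c j k = 1 := by
    intro j
    have h1 := congrFun (congrFun hWW j) j
    rw [Matrix.mul_apply, Matrix.one_apply_eq] at h1
    have h2 : ∀ k, W j k * (star W) k j = ((c j k : ℝ) : ℂ) := fun k => by
      rw [Matrix.star_apply, Complex.star_def]
      simp only [hcdef]
      exact (Complex.mul_conj _)
    rw [Finset.sum_congr rfl (fun k _ => h2 k)] at h1
    exact_mod_cast h1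
  have hcol : ∀ k, ∑ j, c j k = 1 := by
    intro k
    have h1 := congrFun (congrFun hWW' k) k
    rw [Matrix.mul_apply, Matrix.one_apply_eq] at h1
    have h2 : ∀ j, (star W) k j * W j k = ((c j k : ℝ) : ℂ) := fun j => by
      rw [Matrix.star_apply, Complex.star_def]
      simp only [hcdef]
      exact Complex.normSq_eq_conj_mul_self.symm
    rw [Finset.sum_congr rfl (fun j _ => h2 j)] at h1
    exact_mod_cast h1
  -- trace identities
  have hT1m : ρbar * H = (V : Matrix (Fin n) (Fin n) ℂ)
      * (Matrix.diagonal (fun j => (p j : ℂ)) * W * Matrix.diagonal (fun k => (μ k : ℂ)) * star W)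
      * star (V : Matrix (Fin n) (Fin n) ℂ) := by
    rw [hρbV, hsp, hWVU, star_mul, star_star]
    simp only [Matrix.mul_assoc]
    rw [V.2.2, Matrix.mul_one]
  have hT1 : (ρbar * H).trace = ((∑ j, ∑ k, p j * μ k * c j k : ℝ) : ℂ) := by
    rw [hT1m, trace_unitary_conj, trace_dWdW]
  have hT2m : ρstar * H = (U : Matrix (Fin n) (Fin n) ℂ)
      * (Matrix.diagonal (fun k => (q k : ℂ)) * Matrix.diagonal (fun k => (μ k : ℂ)))
      * star (U : Matrix (Fin n) (Fin n) ℂ) := by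
    rw [hρq, hsp]
    simp only [Matrix.mul_assoc]
    rw [← Matrix.mul_assoc (star (U : Matrix (Fin n) (Fin n) ℂ)) (U : Matrix (Fin n) (Fin n) ℂ),
      U.2.1, Matrix.one_mul]
  have hT2 : (ρstar * H).trace = ((∑ k, q k * μ k : ℝ) : ℂ) := by
    rw [hT2m, trace_unitary_conj, Matrix.diagonal_mul_diagonal, Matrix.trace_diagonal]
    push_cast
    rfl
  have hTeq : (ρbar * H).trace = (ρstar * H).trace := by
    have hmul : ∀ (ρ : Matrix (Fin n) (Fin n) ℂ), ρ * H = ∑ α, (f α : ℂ) • (ρ * C α) := fun ρ => by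
      rw [hHdef, Finset.mul_sum]
      exact Finset.sum_congr rfl fun α _ => Matrix.mul_smul ρ _ (C α)
    rw [hmul ρbar, hmul ρstar, Matrix.trace_sum, Matrix.trace_sum]
    exact Finset.sum_congr rfl fun α _ => by
      rw [Matrix.trace_smul, Matrix.trace_smul, hconstraints α]
  have hkey : ∑ j, ∑ k, p j * μ k * c j k = ∑ k, q k * μ k := by
    have h := hTeq
    rw [hT1, hT2] at h
    exact_mod_cast h
  -- summation helpers
  have hrowsum : ∀ (x : Fin n → ℝ), ∑ j, ∑ k, c j k * x j = ∑ j, x j := fun x => by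
    refine Finset.sum_congr rfl fun j _ => ?_
    rw [← Finset.sum_mul, hrow j, one_mul]
  have hcolsum : ∀ (y : Fin n → ℝ), ∑ j, ∑ k, c j k * y k = ∑ k, y k := fun y => by
    rw [Finset.sum_comm]
    refine Finset.sum_congr rfl fun k _ => ?_
    rw [← Finset.sum_mul, hcol k, one_mul]
  -- the nonnegative terms
  set t : Fin n → Fin n → ℝ := fun j k =>
    c j k * (p j * Real.log (p j) - p j * Real.log (q k)) - c j k * (p j - q k) with htdef
  have ht0 : ∀ j k, 0 ≤ t j k := fun j k => by
    have hk := (klein (hp0 j) (hq k)).1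
    have h2 := mul_le_mul_of_nonneg_left hk (hc0 j k)
    simp only [htdef]
    nlinarith [h2]
  have hteq : ∀ j k, (t j k = 0 ↔ (c j k = 0 ∨ p j = q k)) := fun j k => by
    constructor
    · intro h0
      rcases (hc0 j k).eq_or_lt with hc | hc
      · exact Or.inl hc.symm
      · right
        refine (klein (hp0 j) (hq k)).2.mp ?_
        have h1 : c j k * ((p j * Real.log (p j) - p j * Real.log (q k)) - (p j - q k)) = 0 := by
          rw [mul_sub]
          simp only [htdef] at h0
          exact h0
        rcases mul_eq_zero.mp h1 with h | h
        · exact absurd h.symm hc.ne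
        · exact sub_eq_zero.mp h
    · intro h
      rcases h with h | h
      · simp [htdef, h]
      · have hk := (klein (hp0 j) (hq k)).2.mpr h
        simp only [htdef]
        rw [hk]
        ring
  -- computing the total sum
  have hS2 : ∑ j, ∑ k, c j k * (p j * Real.log (q k)) = (∑ k, q k * μ k) - Real.log Z := by
    calc ∑ j, ∑ k, c j k * (p j * Real.log (q k))
        = ∑ j, ∑ k, (p j * μ k * c j k - Real.log Z * (c j k * p j)) :=
          Finset.sum_congr rfl fun j _ => Finset.sum_congr rfl fun k _ => by rw [hlogq k]; ring
      _ = (∑ j, ∑ k, p j * μ k * c j k) - ∑ j, ∑ k, Real.log Z * (c j k * p j) := by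
          simp only [Finset.sum_sub_distrib]
      _ = (∑ k, q k * μ k) - Real.log Z := by
          rw [hkey, show ∑ j, ∑ k, Real.log Z * (c j k * p j)
              = Real.log Z * ∑ j, ∑ k, c j k * p j from by
            rw [Finset.mul_sum]
            exact Finset.sum_congr rfl fun j _ => by rw [Finset.mul_sum]]
          rw [hrowsum p, hsump, mul_one]
  have hqlog : ∑ k, q k * Real.log (q k) = (∑ k, q k * μ k) - Real.log Z := by
    calc ∑ k, q k * Real.log (q k)
        = ∑ k, (q k * μ k - Real.log Z * q k) :=
          Finset.sum_congr rfl fun k _ => by rw [hlogq k]; ring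
      _ = (∑ k, q k * μ k) - ∑ k, Real.log Z * q k := by simp only [Finset.sum_sub_distrib]
      _ = (∑ k, q k * μ k) - Real.log Z := by rw [← Finset.mul_sum, hsumq, mul_one]
  have hL : ∑ j, ∑ k, t j k
      = (∑ j, p j * Real.log (p j)) - ∑ k, q k * Real.log (q k) := by
    calc ∑ j, ∑ k, t j k
        = ∑ j, ∑ k, (c j k * (p j * Real.log (p j)) - c j k * (p j * Real.log (q k))
            - c j k * p j + c j k * q k) :=
          Finset.sum_congr rfl fun j _ => Finset.sum_congr rfl fun k _ => by
            simp only [htdef]; ring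
      _ = ((∑ j, ∑ k, c j k * (p j * Real.log (p j)))
            - ∑ j, ∑ k, c j k * (p j * Real.log (q k)))
            - (∑ j, ∑ k, c j k * p j) + (∑ j, ∑ k, c j k * q k) := by
          simp only [Finset.sum_sub_distrib, Finset.sum_add_distrib]
      _ = (∑ j, p j * Real.log (p j)) - ∑ k, q k * Real.log (q k) := by
          rw [hrowsum (fun j => p j * Real.log (p j)), hS2, hqlog, hrowsum p, hcolsum q,
            hsump, hsumq]
          ring
  have hentdiff : vnEntropy ρstar - vnEntropy ρbar = ∑ j, ∑ k, t j k := by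
    rw [hSstar, hSbar, hL,
      Finset.sum_congr rfl fun k (_ : k ∈ Finset.univ) => sfun_eq (hq k).le,
      Finset.sum_congr rfl fun j (_ : j ∈ Finset.univ) => sfun_eq (hp0 j)]
    rw [Finset.sum_neg_distrib, Finset.sum_neg_distrib]
    ring
  have hsumt0 : 0 ≤ ∑ j, ∑ k, t j k :=
    Finset.sum_nonneg fun j _ => Finset.sum_nonneg fun k _ => ht0 j k
  constructor
  · linarith
  constructor
  · intro heq
    have hzero : ∑ j, ∑ k, t j k = 0 := by linarith
    have hall : ∀ j k, t j k = 0 := by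
      intro j k
      have h1 := (Finset.sum_eq_zero_iff_of_nonneg
        (fun j _ => Finset.sum_nonneg fun k _ => ht0 j k)).mp hzero j (Finset.mem_univ j)
      exact (Finset.sum_eq_zero_iff_of_nonneg (fun k _ => ht0 j k)).mp h1 k (Finset.mem_univ k)
    have hcond : ∀ j k, W j k = 0 ∨ p j = q k := fun j k => by
      rcases (hteq j k).mp (hall j k) with h | h
      · exact Or.inl (Complex.normSq_eq_zero.mp h)
      · exact Or.inr h
    have hWq : W * Matrix.diagonal (fun k => (q k : ℂ)) * star W
        = Matrix.diagonal (fun j => (p j : ℂ)) := by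
      ext j l
      rw [Matrix.mul_apply]
      have e : ∀ k, (W * Matrix.diagonal (fun k => (q k : ℂ))) j k * (star W) k l
          = (p j : ℂ) * (W j k * (star W) k l) := by
        intro k
        rw [Matrix.mul_diagonal]
        rcases hcond j k with h | h
        · rw [h]; ring
        · rw [show ((q k : ℝ) : ℂ) = ((p j : ℝ) : ℂ) from by rw [h]]; ring
      rw [Finset.sum_congr rfl fun k _ => e k, ← Finset.mul_sum, ← Matrix.mul_apply, hWW]
      rcases eq_or_ne j l with rfl | hjl
      · rw [Matrix.one_apply_eq, Matrix.diagonal_apply_eq, mul_one]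
      · rw [Matrix.one_apply_ne hjl, Matrix.diagonal_apply_ne _ hjl, mul_zero]
    rw [hρbV, hρq, hUVW, star_mul, ← hWq]
    simp only [Matrix.mul_assoc]
  · intro heq
    rw [heq]
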